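/- If L is a convex sub-hypergraph of an acyclic hypergraph G and C₂ is the smallest sub-hypergraph containing the outputs of G such that G is covered by C₁, L, and C₂ (with C₁ the predecessor-closure of L minus L), then every terminal node v of L either is terminal in G, or every hyperedge of G having v as a source lies in C₂ (not in C₁). -/

import Mathlib

structure DirHypergraph where
  V : Type
  E : Type
  src : E → List V
  tgt : E → List V

namespace DirHypergraph

inductive Walk (G : DirHypergraph) : G.V → G.V → Type where
  | nil (v : G.V) : Walk G v v
  | cons {u v w : G.V} (e : G.E) (hu : u ∈ G.src e) (hv : v ∈ G.tgt e)
      (p : Walk G v w) : Walk G u w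

def Walk.verts {G : DirHypergraph} : {u v : G.V} → Walk G u v → List G.V
  | _, _, .nil v => [v]
  | u, _, .cons _ _ _ p => u :: p.verts

def Walk.edges {G : DirHypergraph} : {u v : G.V} → Walk G u v → List G.E
  | _, _, .nil _ => []
  | _, _, .cons e _ _ p => e :: p.edges

/-- A hypergraph is acyclic if no path contains the same node twice. -/
def Acyclic (G : DirHypergraph) : Prop :=
  ∀ {u v : G.V} (p : Walk G u v), p.verts.Nodup

/-- There exists a nonempty path from u to v. -/
def Reaches (G : DirHypergraph) (u v : G.V) : Prop :=
  ∃ p : Walk G u v, p.edges ≠ []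

/-- A node is terminal if it is the source of no hyperedge. -/
def Terminal (G : DirHypergraph) (v : G.V) : Prop := ∀ e : G.E, v ∉ G.src e

/-- A sub-hypergraph: sets of nodes and hyperedges closed under the
source and target maps. -/
structure Sub (G : DirHypergraph) where
  SV : Set G.V
  SE : Set G.E
  closed_src : ∀ e ∈ SE, ∀ v ∈ G.src e, v ∈ SV
  closed_tgt : ∀ e ∈ SE, ∀ v ∈ G.tgt e, v ∈ SV

/-- Inclusion of sub-hypergraphs. -/
def Sub.le {G : DirHypergraph} (A B : Sub G) : Prop := A.SV ⊆ B.SV ∧ A.SE ⊆ B.SE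

/-- A sub-hypergraph L is convex if every hyperedge on any path of G between
two nodes of L is in L. -/
def Sub.Convex {G : DirHypergraph} (L : Sub G) : Prop :=
  ∀ (u v : G.V) (p : Walk G u v), u ∈ L.SV → v ∈ L.SV → ∀ e ∈ p.edges, e ∈ L.SE

/-- A hyperedge has a path to L: one of its targets is in L or reaches a node
of L. -/
def EdgeToSub (G : DirHypergraph) (L : Sub G) (e : G.E) : Prop :=
  ∃ v ∈ G.tgt e, ∃ w ∈ L.SV, v = w ∨ G.Reaches v w

/-- `IsC₁ G f L C₁` : C₁ is the smallest sub-hypergraph of G containing the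
inputs of G and every hyperedge of G not in L that has a path to L. -/
def IsC₁ {m : ℕ} (G : DirHypergraph) (f : Fin m → G.V) (L C₁ : Sub G) : Prop :=
  Set.range f ⊆ C₁.SV ∧
  {e : G.E | e ∉ L.SE ∧ EdgeToSub G L e} ⊆ C₁.SE ∧
  ∀ D : Sub G, Set.range f ⊆ D.SV → {e : G.E | e ∉ L.SE ∧ EdgeToSub G L e} ⊆ D.SE →
    C₁.le D

/-- `IsC₂ G g L C₁ C₂` : C₂ is the smallest sub-hypergraph of G containing the
outputs of G such that C₁ ∪ L ∪ C₂ = G. -/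
def IsC₂ {n : ℕ} (G : DirHypergraph) (g : Fin n → G.V) (L C₁ C₂ : Sub G) : Prop :=
  Set.range g ⊆ C₂.SV ∧
  (C₁.SV ∪ L.SV ∪ C₂.SV = Set.univ) ∧ (C₁.SE ∪ L.SE ∪ C₂.SE = Set.univ) ∧
  ∀ D : Sub G, Set.range g ⊆ D.SV →
    (C₁.SV ∪ L.SV ∪ D.SV = Set.univ) → (C₁.SE ∪ L.SE ∪ D.SE = Set.univ) →
    C₂.le D

end DirHypergraph

/- STATEMENT 14: If L is a convex sub-hypergraph of an acyclic hypergraph G and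
C₂ is the smallest sub-hypergraph containing the outputs of G such that G is
covered by C₁, L and C₂ (with C₁ the smallest sub-hypergraph containing the
inputs and every hyperedge not in L with a path to L), then every terminal node
v of L either is terminal in G, or every hyperedge of G having v as a source
lies in C₂ and not in C₁. -/

open DirHypergraph in
theorem terminal_node_of_L {m n : ℕ} (G : DirHypergraph)
    (f : Fin m → G.V) (g : Fin n → G.V)
    (hacyclic : G.Acyclic)
    (hgmono : Function.Injective g)
    (hgterm : Set.range g = {v : G.V | G.Terminal v})
    (L : Sub G) (hL : L.Convex)
    (C₁ : Sub G) (hC₁ : IsC₁ G f L C₁)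
    (C₂ : Sub G) (hC₂ : IsC₂ G g L C₁ C₂)
    (v : G.V) (hvL : v ∈ L.SV) (hvterm : ∀ e ∈ L.SE, v ∉ G.src e) :
    (∀ e : G.E, v ∉ G.src e) ∨
    (∀ e : G.E, v ∈ G.src e → e ∈ C₂.SE ∧ e ∉ C₁.SE) := by
  right
  intro e hve
  have heL : e ∉ L.SE := fun h => hvterm e h hve
  -- Build the canonical D witnessing minimality of C₁
  set D : Sub G :=
    { SV := Set.range f ∪ {w | ∃ e' ∈ {e' : G.E | e' ∉ L.SE ∧ EdgeToSub G L e'},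
        w ∈ G.src e' ∨ w ∈ G.tgt e'}
      SE := {e' : G.E | e' ∉ L.SE ∧ EdgeToSub G L e'}
      closed_src := fun e' he' w hw => Or.inr ⟨e', he', Or.inl hw⟩
      closed_tgt := fun e' he' w hw => Or.inr ⟨e', he', Or.inr hw⟩ } with hD
  have hle : C₁.le D := hC₁.2.2 D (Set.subset_union_left) (fun e' he' => he')
  have heC₁ : e ∉ C₁.SE := by
    intro h
    have hmem : e ∈ D.SE := hle.2 h
    obtain ⟨_, t, ht, w, hwL, hcase⟩ := hmem
    rcases hcase with rfl | ⟨p, _⟩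
    · exact heL (hL v t (Walk.cons e hve ht (Walk.nil t)) hvL hwL e
        (by simp [Walk.edges]))
    · exact heL (hL v w (Walk.cons e hve ht p) hvL hwL e
        (by simp [Walk.edges]))
  have hcov := hC₂.2.2.1
  have : e ∈ C₁.SE ∪ L.SE ∪ C₂.SE := by rw [hcov]; trivial
  rcases this with (h | h) | h
  · exact absurd h heC₁
  · exact absurd h heL
  · exact ⟨h, heC₁⟩
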